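/- Let q and ε be real numbers with 0 < q < 1/2, 0 < ε < 1, and 8qε/(1 - q) ≤ 1/2. Then the Kullback–Leibler divergence between the Bernoulli distributions with parameters q and q(1+8ε) satisfies KL(Ber(q) ‖ Ber(q(1+8ε))) = q · log(q / (q(1+8ε))) + (1 - q) · log((1 - q) / (1 - q(1+8ε))) ≤ 96 · q · ε². -/

import Mathlib

open intervalIntegral in
lemma log_one_add_ge_aux (x : ℝ) (hx : 0 ≤ x) : x - x ^ 2 / 2 ≤ Real.log (1 + x) := by
  have h1 : (0:ℝ) < 1 + x := by linarith
  have hlog : Real.log (1 + x) = ∫ t in (1:ℝ)..(1+x), t⁻¹ := by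
    rw [integral_inv_of_pos one_pos h1, div_one]
  have hint1 : IntervalIntegrable (fun t : ℝ => 2 - t) MeasureTheory.volume 1 (1+x) :=
    (continuous_const.sub continuous_id).intervalIntegrable _ _
  have hint2 : IntervalIntegrable (fun t : ℝ => t⁻¹) MeasureTheory.volume 1 (1+x) := by
    apply ContinuousOn.intervalIntegrable
    apply ContinuousOn.inv₀ continuousOn_id
    intro t ht h
    rw [Set.uIcc_of_le (by linarith)] at ht
    simp only [id_eq] at h
    have := ht.1
    linarith
  have hmono : (∫ t in (1:ℝ)..(1+x), (2 - t)) ≤ ∫ t in (1:ℝ)..(1+x), t⁻¹ := by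
    apply integral_mono_on (by linarith) hint1 hint2
    intro t ht
    have ht1 : 1 ≤ t := ht.1
    have ht0 : 0 < t := by linarith
    rw [← sub_nonneg]
    have key : t⁻¹ - (2 - t) = (t - 1)^2 / t := by field_simp; ring
    rw [key]
    positivity
  have hcalc : (∫ t in (1:ℝ)..(1+x), (2 - t)) = x - x ^ 2 / 2 := by
    rw [integral_sub intervalIntegrable_const (continuous_id'.intervalIntegrable _ _)]
    simp [integral_id]
    ring
  rw [hlog]
  linarith [hmono, hcalc]

open intervalIntegral in
lemma neg_log_one_sub_le_aux (y : ℝ) (hy0 : 0 ≤ y) (hy2 : y ≤ 1/2) :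
    -Real.log (1 - y) ≤ y + y ^ 2 := by
  have h1 : (0:ℝ) < 1 - y := by linarith
  have hlog : -Real.log (1 - y) = ∫ t in (1-y)..(1:ℝ), t⁻¹ := by
    rw [integral_inv_of_pos h1 one_pos, Real.log_div one_ne_zero (by linarith), Real.log_one]
    ring
  have hint1 : IntervalIntegrable (fun t : ℝ => t⁻¹) MeasureTheory.volume (1-y) 1 := by
    apply ContinuousOn.intervalIntegrable
    apply ContinuousOn.inv₀ continuousOn_id
    intro t ht h
    rw [Set.uIcc_of_le (by linarith)] at ht
    simp only [id_eq] at h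
    have := ht.1
    linarith
  have hint2 : IntervalIntegrable (fun t : ℝ => 3 - 2 * t) MeasureTheory.volume (1-y) 1 :=
    (continuous_const.sub (continuous_const.mul continuous_id')).intervalIntegrable _ _
  have hmono : (∫ t in (1-y)..(1:ℝ), t⁻¹) ≤ ∫ t in (1-y)..(1:ℝ), (3 - 2 * t) := by
    apply integral_mono_on (by linarith) hint1 hint2
    intro t ht
    have ht1 : 1 - y ≤ t := ht.1
    have ht2 : t ≤ 1 := ht.2
    have ht0 : 0 < t := by linarith
    rw [← sub_nonneg]
    have key : (3 - 2 * t) - t⁻¹ = (2 * t - 1) * (1 - t) / t := by field_simp; ring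
    rw [key]
    have h2t : 0 ≤ 2 * t - 1 := by linarith
    have h1t : 0 ≤ 1 - t := by linarith
    positivity
  have hcalc : (∫ t in (1-y)..(1:ℝ), (3 - 2 * t)) = y + y ^ 2 := by
    rw [integral_sub (f := fun _ : ℝ => (3:ℝ)) (g := fun t : ℝ => 2 * t) intervalIntegrable_const
      ((continuous_const.mul continuous_id').intervalIntegrable _ _),
      intervalIntegral.integral_const_mul]
    simp [integral_id]
    ring
  rw [hlog]
  linarith [hmono, hcalc]

theorem stmt_1 (q ε : ℝ) (hq0 : 0 < q) (hq1 : q < 1/2) (hε0 : 0 < ε) (hε1 : ε < 1)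
    (hcond : 8 * q * ε / (1 - q) ≤ 1/2) :
    q * Real.log (q / (q * (1 + 8 * ε))) +
      (1 - q) * Real.log ((1 - q) / (1 - q * (1 + 8 * ε))) ≤ 96 * q * ε ^ 2 := by
  have hq1' : 0 < 1 - q := by linarith
  set y : ℝ := 8 * q * ε / (1 - q) with hy
  have hy0 : 0 ≤ y := by positivity
  have hy2 : y ≤ 1/2 := hcond
  have hyval : 8 * q * ε = y * (1 - q) := by rw [hy, div_mul_cancel₀ _ hq1'.ne']
  have h8ε : (0:ℝ) < 1 + 8 * ε := by linarith
  have hr1 : 1 - q * (1 + 8 * ε) = (1 - q) * (1 - y) := by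
    have : (1 - q) * (1 - y) = 1 - q - y * (1 - q) := by ring
    rw [this, ← hyval]; ring
  have hy1 : 0 < 1 - y := by linarith
  have hterm1 : q / (q * (1 + 8 * ε)) = (1 + 8 * ε)⁻¹ := by
    field_simp
  have hterm2 : (1 - q) / (1 - q * (1 + 8 * ε)) = (1 - y)⁻¹ := by
    rw [hr1]
    field_simp
  rw [hterm1, hterm2, Real.log_inv, Real.log_inv]
  have hA : 8 * ε - (8 * ε) ^ 2 / 2 ≤ Real.log (1 + 8 * ε) :=
    log_one_add_ge_aux (8 * ε) (by linarith)
  have hB : -Real.log (1 - y) ≤ y + y ^ 2 := neg_log_one_sub_le_aux y hy0 hy2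
  have h1 : q * -Real.log (1 + 8 * ε) ≤ q * (-(8 * ε) + (8 * ε) ^ 2 / 2) := by
    have := mul_le_mul_of_nonneg_left hA hq0.le
    nlinarith [this]
  have h2 : (1 - q) * -Real.log (1 - y) ≤ (1 - q) * (y + y ^ 2) :=
    mul_le_mul_of_nonneg_left hB hq1'.le
  have hy2' : (1 - q) * (y + y ^ 2) = 8 * q * ε + y * (8 * q * ε) := by
    have : (1 - q) * (y + y ^ 2) = y * (1 - q) + y * (y * (1 - q)) := by ring
    rw [this, ← hyval]
  have hyq : y * (8 * q * ε) ≤ 64 * q * ε ^ 2 := by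
    have hyle : y ≤ 16 * q * ε := by
      rw [hy, div_le_iff₀ hq1']
      nlinarith [mul_nonneg (mul_nonneg hq0.le hε0.le) (show (0:ℝ) ≤ 1 - 2*q by linarith)]
    have h8 : (0:ℝ) ≤ 8 * q * ε := by positivity
    nlinarith [mul_le_mul_of_nonneg_right hyle h8,
      mul_nonneg (mul_nonneg hq0.le (sq_nonneg ε)) (show (0:ℝ) ≤ 1 - 2*q by linarith)]
  calc q * -Real.log (1 + 8 * ε) + (1 - q) * -Real.log (1 - y)
      ≤ q * (-(8 * ε) + (8 * ε) ^ 2 / 2) + (8 * q * ε + y * (8 * q * ε)) := by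
        rw [← hy2']; linarith
    _ ≤ q * (-(8 * ε) + (8 * ε) ^ 2 / 2) + (8 * q * ε + 64 * q * ε ^ 2) := by linarith
    _ ≤ 96 * q * ε ^ 2 := by nlinarith
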